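/- Let 1/2 < α < 1, ρ ∈ [0,1], φ = αρπ, and suppose φ < (2α-1)π. Set θ₃ = (φ+π)/α and F(z) = z + e^{iφ} z^{1-α}. Then π < θ₃ < 2π, and for all r ≥ 0, F(r e^{iθ₃}) = (r - r^{1-α}) e^{iθ₃}. In particular F is not injective on the half-line l_{θ₃}, and F(l_{θ₃}) = {r e^{iθ₃} : r ≥ -α(1-α)^{(1-α)/α}}. -/

import Mathlib

open Complex Real Set

private lemma rpow_le_young {α r : ℝ} (hα : 0 < α) (hα' : α < 1) (hr : 0 ≤ r) :
    r ^ (1 - α) ≤ r + α * (1 - α) ^ ((1 - α) / α) := by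
  have h1α : 0 < 1 - α := by linarith
  have hpq : Real.HolderConjugate (1 / (1 - α)) (1 / α) := by
    rw [Real.holderConjugate_iff]
    constructor
    · rw [lt_div_iff₀ h1α]; linarith
    · field_simp; ring
  have hy := Real.young_inequality_of_nonneg (Real.rpow_nonneg hr (1 - α)) h1α.le hpq
  have e1 : (r ^ (1 - α)) ^ (1 / (1 - α)) = r := by
    rw [← Real.rpow_mul hr, mul_one_div, div_self (ne_of_gt h1α), Real.rpow_one]
  rw [e1] at hy
  have hd : r ^ (1 - α) * (1 - α) ≤ r * (1 - α) + (1 - α) ^ (1 / α) * α := by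
    have h2 : r / (1 / (1 - α)) = r * (1 - α) := by field_simp
    have h3 : (1 - α) ^ (1 / α) / (1 / α) = (1 - α) ^ (1 / α) * α := by field_simp
    calc r ^ (1 - α) * (1 - α) ≤ r / (1 / (1 - α)) + (1 - α) ^ (1 / α) / (1 / α) := hy
      _ = r * (1 - α) + (1 - α) ^ (1 / α) * α := by rw [h2, h3]
  have hpow : (1 - α) ^ (1 / α) = (1 - α) ^ ((1 - α) / α) * (1 - α) := by
    have : (1 / α : ℝ) = (1 - α) / α + 1 := by field_simp; ring
    rw [this, Real.rpow_add h1α, Real.rpow_one]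
  rw [hpow] at hd
  nlinarith [hd, Real.rpow_nonneg h1α.le ((1 - α) / α)]

private lemma g_min_point {α : ℝ} (hα : 0 < α) (hα' : α < 1) :
    (1 - α) ^ (1 / α) - ((1 - α) ^ (1 / α)) ^ (1 - α)
      = -α * (1 - α) ^ ((1 - α) / α) := by
  have h1α : 0 < 1 - α := by linarith
  have e1 : ((1 - α) ^ (1 / α)) ^ (1 - α) = (1 - α) ^ ((1 - α) / α) := by
    rw [← Real.rpow_mul h1α.le, one_div, inv_mul_eq_div]
  have e2 : (1 - α) ^ (1 / α) = (1 - α) ^ ((1 - α) / α) * (1 - α) := by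
    have : (1 / α : ℝ) = (1 - α) / α + 1 := by field_simp; ring
    rw [this, Real.rpow_add h1α, Real.rpow_one]
  rw [e1, e2]; ring

private lemma g_image {α : ℝ} (hα : 0 < α) (hα' : α < 1) :
    (fun r : ℝ => r - r ^ (1 - α)) '' Set.Ici 0
      = Set.Ici (-α * (1 - α) ^ ((1 - α) / α)) := by
  have h1α : 0 < 1 - α := by linarith
  have hcont : Continuous (fun r : ℝ => r - r ^ (1 - α)) :=
    continuous_id.sub (Real.continuous_rpow_const h1α.le)
  set m : ℝ := -α * (1 - α) ^ ((1 - α) / α) with hm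
  have hr₀ : (0 : ℝ) < (1 - α) ^ (1 / α) := Real.rpow_pos_of_pos h1α _
  apply Set.Subset.antisymm
  · rintro w ⟨r, hr, rfl⟩
    have := rpow_le_young hα hα' hr
    simp only [Set.mem_Ici, hm]
    linarith
  · intro t ht
    simp only [Set.mem_Ici] at ht
    -- choose a large R with g R ≥ t
    set R : ℝ := max ((1 - α) ^ (1 / α)) (max ((2 : ℝ) ^ (1 / α)) (2 * |t| + 1)) with hR
    have hR1 : (2 : ℝ) ^ (1 / α) ≤ R := le_trans (le_max_left _ _) (le_max_right _ _)
    have hRt : 2 * |t| + 1 ≤ R := le_trans (le_max_right _ _) (le_max_right _ _)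
    have hRpos : 0 < R := lt_of_lt_of_le (Real.rpow_pos_of_pos two_pos _) hR1
    have hRα : (2 : ℝ) ≤ R ^ α := by
      calc (2 : ℝ) = ((2 : ℝ) ^ (1 / α)) ^ α := by
            rw [← Real.rpow_mul (by norm_num), one_div, inv_mul_cancel₀ (ne_of_gt hα),
              Real.rpow_one]
        _ ≤ R ^ α := Real.rpow_le_rpow (Real.rpow_nonneg (by norm_num) _) hR1 hα.le
    have hgR : t ≤ R - R ^ (1 - α) := by
      have e : R ^ (1 - α) = R / R ^ α := by
        rw [Real.rpow_sub hRpos, Real.rpow_one]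
      have h2 : R / R ^ α ≤ R / 2 := by
        gcongr
      have : R ^ (1 - α) ≤ R / 2 := e ▸ h2
      have habs : t ≤ |t| := le_abs_self t
      linarith
    have hab : (1 - α) ^ (1 / α) ≤ R := le_max_left _ _
    have hivt := intermediate_value_Icc hab (hcont.continuousOn
      (s := Set.Icc ((1 - α) ^ (1 / α)) R))
    have htmem : t ∈ Set.Icc
        ((1 - α) ^ (1 / α) - ((1 - α) ^ (1 / α)) ^ (1 - α)) (R - R ^ (1 - α)) := by
      constructor
      · rw [g_min_point hα hα']; exact ht
      · exact hgR
    obtain ⟨r, hrmem, hrval⟩ := hivt htmem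
    exact ⟨r, le_trans hr₀.le hrmem.1, hrval⟩

noncomputable def Fray (α φ θ r : ℝ) : ℂ :=
  (r : ℂ) * Complex.exp (θ * Complex.I) +
    Complex.exp (φ * Complex.I) * ((r ^ (1 - α) : ℝ) : ℂ) *
      Complex.exp (((1 - α) * θ) * Complex.I)

theorem boolean_stable_F_collapses_ray_theta3
    (α ρ φ θ₃ : ℝ) (hα : 1 / 2 < α) (hα' : α < 1) (hρ : ρ ∈ Set.Icc (0 : ℝ) 1)
    (hφ : φ = α * ρ * π) (hφ' : φ < (2 * α - 1) * π) (hθ₃ : θ₃ = (φ + π) / α) :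
    (π < θ₃ ∧ θ₃ < 2 * π) ∧
      (∀ r : ℝ, 0 ≤ r →
        Fray α φ θ₃ r = ((r - r ^ (1 - α) : ℝ) : ℂ) * Complex.exp (θ₃ * Complex.I)) ∧
      ¬ Set.InjOn (Fray α φ θ₃) (Set.Ici 0) ∧
      Fray α φ θ₃ '' Set.Ici 0 =
        {w : ℂ | ∃ r : ℝ, -α * (1 - α) ^ ((1 - α) / α) ≤ r ∧
          w = (r : ℂ) * Complex.exp (θ₃ * Complex.I)} := by
  have hα0 : (0 : ℝ) < α := by linarith
  have hπ : (0 : ℝ) < π := Real.pi_pos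
  have hφ0 : 0 ≤ φ := by
    rw [hφ]; exact mul_nonneg (mul_nonneg hα0.le hρ.1) hπ.le
  -- exponential identity
  have hre : φ + (1 - α) * θ₃ = θ₃ - π := by
    rw [hθ₃]; field_simp; ring
  have hexp : Complex.exp (φ * Complex.I) * Complex.exp ((((1 - α) * θ₃ : ℝ)) * Complex.I)
      = -Complex.exp (θ₃ * Complex.I) := by
    rw [← Complex.exp_add]
    have e1 : (φ : ℂ) * Complex.I + (((1 - α) * θ₃ : ℝ)) * Complex.I
        = ((φ + (1 - α) * θ₃ : ℝ)) * Complex.I := by push_cast; ring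
    rw [e1, hre]
    have : ((θ₃ - π : ℝ) : ℂ) * Complex.I = θ₃ * Complex.I + -(π * Complex.I) := by
      push_cast; ring
    rw [this, Complex.exp_add, Complex.exp_neg, Complex.exp_pi_mul_I]
    norm_num
  have part2 : ∀ r : ℝ, 0 ≤ r →
      Fray α φ θ₃ r = ((r - r ^ (1 - α) : ℝ) : ℂ) * Complex.exp (θ₃ * Complex.I) := by
    intro r hr
    have : Fray α φ θ₃ r = (r : ℂ) * Complex.exp (θ₃ * Complex.I) +
        (Complex.exp (φ * Complex.I) * Complex.exp ((((1 - α) * θ₃ : ℝ)) * Complex.I))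
          * ((r ^ (1 - α) : ℝ) : ℂ) := by
      unfold Fray; push_cast; ring
    rw [this, hexp]; push_cast; ring
  refine ⟨⟨?_, ?_⟩, part2, ?_, ?_⟩
  · rw [hθ₃, lt_div_iff₀ hα0]; nlinarith
  · rw [hθ₃, div_lt_iff₀ hα0]; nlinarith
  · intro h
    have h1α : (1 : ℝ) - α ≠ 0 := by linarith
    have F0 : Fray α φ θ₃ 0 = 0 := by
      rw [part2 0 le_rfl, Real.zero_rpow h1α]; simp
    have F1 : Fray α φ θ₃ 1 = 0 := by
      rw [part2 1 zero_le_one, Real.one_rpow]; simp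
    have : (0 : ℝ) = 1 := h (Set.self_mem_Ici) (Set.mem_Ici.mpr zero_le_one)
      (by rw [F0, F1])
    norm_num at this
  · have himg : Fray α φ θ₃ '' Set.Ici 0 =
        (fun t : ℝ => (t : ℂ) * Complex.exp (θ₃ * Complex.I)) ''
          ((fun r : ℝ => r - r ^ (1 - α)) '' Set.Ici 0) := by
      rw [← Set.image_comp]
      exact Set.image_congr fun r hr => part2 r hr
    rw [himg, g_image hα0 hα']
    ext w
    simp only [Set.mem_image, Set.mem_Ici, Set.mem_setOf_eq]
    constructor
    · rintro ⟨t, ht, rfl⟩; exact ⟨t, ht, rfl⟩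
    · rintro ⟨t, ht, rfl⟩; exact ⟨t, ht, rfl⟩
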